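/- Let 𝒞 = C([0,1],ℝ) be the space of continuous real-valued maps on [0,1] with the supremum norm. For every M > 0 there exists a set Γ ⊂ 𝒫¹(𝒞) such that μ_UI(Γ) = 0 and μ_{H,W}(Γ) = M. (Hence the tightness hypothesis in the equality μ_{H,W} = μ_UI cannot be omitted.) -/

import Mathlib

open MeasureTheory

/-- `𝒞 = C([0,1], ℝ)` with the supremum norm. -/
abbrev 𝒞 : Type := C(Set.Icc (0 : ℝ) 1, ℝ)

noncomputable instance : MeasurableSpace 𝒞 := borel 𝒞

instance : BorelSpace 𝒞 := ⟨rfl⟩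

/-- The Wasserstein metric via Kantorovich duality. -/
noncomputable def W {S : Type*} [MetricSpace S] [MeasurableSpace S]
    (P Q : Measure S) : ℝ :=
  sSup {r : ℝ | ∃ f : S → ℝ, LipschitzWith 1 f ∧ r = |(∫ x, f x ∂P) - ∫ x, f x ∂Q|}

/-- `𝒫¹(S)`: Borel probability measures on `S` with finite first moment. -/
def P1 (S : Type*) [MetricSpace S] [MeasurableSpace S] : Set (Measure S) :=
  {P | IsProbabilityMeasure P ∧ ∀ a : S, Integrable (fun x => dist a x) P}

/-- The relative Hausdorff measure of non-compactness for the Wasserstein metric. -/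
noncomputable def muHW {S : Type*} [MetricSpace S] [MeasurableSpace S]
    (Γ : Set (Measure S)) : ℝ :=
  sInf {r : ℝ | ∃ Φ : Finset (Measure S), Φ.Nonempty ∧ ↑Φ ⊆ P1 S ∧
    r = sSup {s : ℝ | ∃ P ∈ Γ, s = sInf {t : ℝ | ∃ Q ∈ Φ, t = W P Q}}}

/-- The measure of non-uniform integrability. -/
noncomputable def muUI {S : Type*} [MetricSpace S] [MeasurableSpace S]
    (Γ : Set (Measure S)) : ℝ :=
  sInf {r : ℝ | ∃ a : S, ∃ B : Set S, Bornology.IsBounded B ∧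
    r = sSup {s : ℝ | ∃ P ∈ Γ, s = ∫ x in Bᶜ, dist a x ∂P}}

/-! ### Auxiliary constructions: the "moving bump" functions `t ↦ M (1 - cos (2ⁿ π t))` -/

noncomputable def bump (M : ℝ) (n : ℕ) : 𝒞 :=
  ⟨fun t => M * (1 - Real.cos (2 ^ n * Real.pi * t)), by fun_prop⟩

lemma bump_apply (M : ℝ) (n : ℕ) (t : Set.Icc (0:ℝ) 1) :
    bump M n t = M * (1 - Real.cos (2 ^ n * Real.pi * t)) := rfl

lemma dist_bump_const (M : ℝ) (hM : 0 ≤ M) (n : ℕ) :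
    dist (bump M n) (ContinuousMap.const _ M) ≤ M := by
  rw [ContinuousMap.dist_le hM]
  intro t
  rw [ContinuousMap.const_apply, bump_apply, Real.dist_eq]
  have h1 := Real.neg_one_le_cos (2 ^ n * Real.pi * t)
  have h2 := Real.cos_le_one (2 ^ n * Real.pi * t)
  rw [abs_le]; constructor <;> nlinarith

lemma dist_bump_zero (M : ℝ) (hM : 0 ≤ M) (n : ℕ) :
    dist (bump M n) (0 : 𝒞) ≤ 2 * M := by
  rw [ContinuousMap.dist_le (by linarith)]
  intro t
  rw [ContinuousMap.zero_apply, bump_apply, Real.dist_eq]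
  have h1 := Real.neg_one_le_cos (2 ^ n * Real.pi * t)
  have h2 := Real.cos_le_one (2 ^ n * Real.pi * t)
  rw [abs_le]; constructor <;> nlinarith

lemma dist_bump_ge' (M : ℝ) (hM : 0 ≤ M) {n m : ℕ} (h : n < m) :
    2 * M ≤ dist (bump M n) (bump M m) := by
  have ht : ((2:ℝ) ^ n)⁻¹ ∈ Set.Icc (0:ℝ) 1 := by
    constructor
    · positivity
    · rw [inv_le_one_iff₀]; right; exact one_le_pow₀ (by norm_num)
  set t₀ : Set.Icc (0:ℝ) 1 := ⟨_, ht⟩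
  have hn : bump M n t₀ = 2 * M := by
    rw [bump_apply]
    have : (2:ℝ) ^ n * Real.pi * ((2:ℝ) ^ n)⁻¹ = Real.pi := by
      field_simp
    rw [show ((t₀ : ℝ)) = ((2:ℝ)^n)⁻¹ from rfl, this, Real.cos_pi]; ring
  have hm : bump M m t₀ = 0 := by
    rw [bump_apply]
    obtain ⟨k, rfl⟩ : ∃ k, m = n + (k + 1) := ⟨m - n - 1, by omega⟩
    have : (2:ℝ) ^ (n + (k+1)) * Real.pi * ((2:ℝ) ^ n)⁻¹ = (2:ℝ)^k * (2 * Real.pi) := by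
      rw [pow_add]; field_simp; ring
    rw [show ((t₀ : ℝ)) = ((2:ℝ)^n)⁻¹ from rfl, this]
    rw [show ((2:ℝ)^k) = ((2^k : ℕ) : ℝ) by push_cast; ring, Real.cos_nat_mul_two_pi]
    ring
  calc 2 * M = dist (bump M n t₀) (bump M m t₀) := by
        rw [hn, hm, Real.dist_eq]; rw [abs_of_nonneg (by linarith)]; ring
    _ ≤ _ := ContinuousMap.dist_apply_le_dist t₀

lemma dist_bump_ge (M : ℝ) (hM : 0 ≤ M) {n m : ℕ} (h : n ≠ m) :
    2 * M ≤ dist (bump M n) (bump M m) := by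
  rcases h.lt_or_gt with h' | h'
  · exact dist_bump_ge' M hM h'
  · rw [dist_comm]; exact dist_bump_ge' M hM h'

/-! ### Basic facts about the Wasserstein functional `W` -/

lemma W_nonneg {S : Type*} [MetricSpace S] [MeasurableSpace S] (P Q : Measure S) :
    0 ≤ W P Q :=
  Real.sSup_nonneg (by rintro r ⟨f, hf, rfl⟩; exact abs_nonneg _)

lemma integrable_lip {Q : Measure 𝒞} (hQ : Q ∈ P1 𝒞) {f : 𝒞 → ℝ} (hf : LipschitzWith 1 f) :
    Integrable f Q := by
  have : IsProbabilityMeasure Q := hQ.1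
  refine Integrable.mono' ((integrable_const |f 0|).add (hQ.2 0))
    hf.continuous.aestronglyMeasurable ?_
  filter_upwards with y
  simp only [Pi.add_apply, Real.norm_eq_abs]
  have h1 := hf.dist_le_mul y 0
  rw [NNReal.coe_one, one_mul, Real.dist_eq, dist_comm y 0] at h1
  linarith [abs_sub_abs_le_abs_sub (f y) (f 0)]

lemma abs_sub_integral_le {Q : Measure 𝒞} (hQ : Q ∈ P1 𝒞) {f : 𝒞 → ℝ}
    (hf : LipschitzWith 1 f) (x : 𝒞) :
    |f x - ∫ y, f y ∂Q| ≤ ∫ y, dist x y ∂Q := by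
  have : IsProbabilityMeasure Q := hQ.1
  have hfi : Integrable f Q := integrable_lip hQ hf
  have h1 : f x - ∫ y, f y ∂Q = ∫ y, (f x - f y) ∂Q := by
    rw [integral_sub (integrable_const _) hfi, integral_const, probReal_univ]; simp
  rw [h1]
  calc |∫ y, (f x - f y) ∂Q| ≤ ∫ y, |f x - f y| ∂Q := by
        simpa [Real.norm_eq_abs] using
          norm_integral_le_integral_norm (fun y => f x - f y) (μ := Q)
    _ ≤ ∫ y, dist x y ∂Q := by
        refine integral_mono ((integrable_const _).sub hfi).abs (hQ.2 x) fun y => ?_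
        have := hf.dist_le_mul x y
        rw [Real.dist_eq] at this
        simpa using this

lemma W_dirac_le {Q : Measure 𝒞} (hQ : Q ∈ P1 𝒞) (x : 𝒞) :
    W (Measure.dirac x) Q ≤ ∫ y, dist x y ∂Q := by
  refine Real.sSup_le ?_ (integral_nonneg fun y => dist_nonneg)
  rintro r ⟨f, hf, rfl⟩
  rw [integral_dirac]
  exact abs_sub_integral_le hQ hf x

lemma le_W_dirac {Q : Measure 𝒞} (hQ : Q ∈ P1 𝒞) (x : 𝒞) {f : 𝒞 → ℝ}
    (hf : LipschitzWith 1 f) :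
    |f x - ∫ y, f y ∂Q| ≤ W (Measure.dirac x) Q := by
  refine le_csSup ⟨∫ y, dist x y ∂Q, ?_⟩ ⟨f, hf, by rw [integral_dirac]⟩
  rintro r ⟨g, hg, rfl⟩
  rw [integral_dirac]
  exact abs_sub_integral_le hQ hg x

lemma W_dirac_pair_ge {Q : Measure 𝒞} (hQ : Q ∈ P1 𝒞) (x y : 𝒞) :
    dist x y ≤ W (Measure.dirac x) Q + W (Measure.dirac y) Q := by
  have hfx := le_W_dirac hQ x (LipschitzWith.dist_right x)
  have hfy := le_W_dirac hQ y (LipschitzWith.dist_right x)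
  rw [dist_self] at hfx
  have h1 : ∫ z, dist x z ∂Q ≤ W (Measure.dirac x) Q := by
    rwa [zero_sub, abs_neg, abs_of_nonneg (integral_nonneg fun z => dist_nonneg)] at hfx
  have h2 : dist x y - ∫ z, dist x z ∂Q ≤ W (Measure.dirac y) Q :=
    le_trans (le_abs_self _) hfy
  linarith

lemma dirac_mem_P1 (x : 𝒞) : Measure.dirac x ∈ P1 𝒞 :=
  ⟨inferInstance, fun a =>
    (integrable_const (dist a x)).congr (ae_eq_dirac fun z => dist a z).symm⟩

/-- For every `M > 0` there is a set `Γ ⊆ 𝒫¹(𝒞)` of probability measures on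
`𝒞 = C([0,1],ℝ)` with `μ_UI(Γ) = 0` and `μ_{H,W}(Γ) = M`; hence the tightness hypothesis
in the equality `μ_{H,W} = μ_UI` cannot be omitted. -/
theorem exists_uniformlyIntegrable_with_muHW_eq (M : ℝ) (hM : 0 < M) :
    ∃ Γ : Set (Measure 𝒞), Γ ⊆ P1 𝒞 ∧ muUI Γ = 0 ∧ muHW Γ = M := by
  classical
  refine ⟨Set.range fun n : ℕ => Measure.dirac (bump M n), ?_, ?_, ?_⟩
  · rintro _ ⟨n, rfl⟩; exact dirac_mem_P1 _
  · -- muUI = 0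
    set Γ : Set (Measure 𝒞) := Set.range fun n : ℕ => Measure.dirac (bump M n) with hΓ
    unfold muUI
    set B : Set 𝒞 := Metric.closedBall (0:𝒞) (2*M) with hB
    have hzero : ∀ P ∈ Γ, ∫ x in Bᶜ, dist (0:𝒞) x ∂P = 0 := by
      rintro _ ⟨n, rfl⟩
      rw [MeasureTheory.restrict_dirac' measurableSet_closedBall.compl, if_neg, integral_zero_measure]
      simp only [Set.notMem_compl_iff]
      exact Metric.mem_closedBall.mpr (dist_bump_zero M hM.le n)
    have hset : {s : ℝ | ∃ P ∈ Γ, s = ∫ x in Bᶜ, dist (0:𝒞) x ∂P} = {0} := by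
      ext s
      simp only [Set.mem_setOf_eq, Set.mem_singleton_iff]
      constructor
      · rintro ⟨P, hP, rfl⟩; exact hzero P hP
      · rintro rfl; exact ⟨_, ⟨0, rfl⟩, (hzero _ ⟨0, rfl⟩).symm⟩
    have h0mem : (0:ℝ) ∈ {r : ℝ | ∃ a : 𝒞, ∃ B' : Set 𝒞, Bornology.IsBounded B' ∧
        r = sSup {s : ℝ | ∃ P ∈ Γ, s = ∫ x in B'ᶜ, dist a x ∂P}} :=
      ⟨0, B, Metric.isBounded_closedBall, by rw [hset, csSup_singleton]⟩
    have hlb : ∀ r ∈ {r : ℝ | ∃ a : 𝒞, ∃ B' : Set 𝒞, Bornology.IsBounded B' ∧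
        r = sSup {s : ℝ | ∃ P ∈ Γ, s = ∫ x in B'ᶜ, dist a x ∂P}}, (0:ℝ) ≤ r := by
      rintro r ⟨a, B', hB', rfl⟩
      exact Real.sSup_nonneg (by rintro s ⟨P, hP, rfl⟩; exact integral_nonneg fun x => dist_nonneg)
    exact le_antisymm (csInf_le ⟨0, hlb⟩ h0mem) (le_csInf ⟨0, h0mem⟩ hlb)
  · -- muHW = M
    set Γ : Set (Measure 𝒞) := Set.range fun n : ℕ => Measure.dirac (bump M n) with hΓ
    unfold muHW
    set T : Set ℝ := {r : ℝ | ∃ Φ : Finset (Measure 𝒞), Φ.Nonempty ∧ ↑Φ ⊆ P1 𝒞 ∧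
      r = sSup {s : ℝ | ∃ P ∈ Γ, s = sInf {t : ℝ | ∃ Q ∈ Φ, t = W P Q}}} with hT
    have hlow : ∀ r ∈ T, M ≤ r := by
      rintro r ⟨Φ, hΦne, hΦ1, rfl⟩
      obtain ⟨Q₀, hQ₀⟩ := hΦne
      have hQ₀1 : Q₀ ∈ P1 𝒞 := hΦ1 hQ₀
      haveI : IsProbabilityMeasure Q₀ := hQ₀1.1
      set S : Set ℝ := {s : ℝ | ∃ P ∈ Γ, s = sInf {t : ℝ | ∃ Q ∈ Φ, t = W P Q}} with hS
      have hSbdd : BddAbove S := by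
        refine ⟨2*M + ∫ y, dist (0:𝒞) y ∂Q₀, ?_⟩
        rintro s ⟨P, ⟨k, rfl⟩, rfl⟩
        refine le_trans (csInf_le ⟨0, ?_⟩ ⟨Q₀, hQ₀, rfl⟩) ?_
        · rintro t ⟨Q, hQ, rfl⟩; exact W_nonneg _ _
        · refine le_trans (W_dirac_le hQ₀1 _) ?_
          calc ∫ y, dist (bump M k) y ∂Q₀ ≤ ∫ y, (2*M + dist (0:𝒞) y) ∂Q₀ := by
                refine integral_mono (hQ₀1.2 (bump M k))
                  ((integrable_const _).add (hQ₀1.2 0)) fun y => ?_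
                calc dist (bump M k) y ≤ dist (bump M k) 0 + dist (0:𝒞) y := dist_triangle _ _ _
                  _ ≤ 2*M + dist (0:𝒞) y := by linarith [dist_bump_zero M hM.le k]
            _ = 2*M + ∫ y, dist (0:𝒞) y ∂Q₀ := by
                rw [integral_add (integrable_const _) (hQ₀1.2 0), integral_const, probReal_univ]
                simp
      have hmin : ∀ n : ℕ, ∃ Q ∈ Φ,
          sInf {t : ℝ | ∃ Q ∈ Φ, t = W (Measure.dirac (bump M n)) Q}
            = W (Measure.dirac (bump M n)) Q := by
        intro n
        have hfin : {t : ℝ | ∃ Q ∈ Φ, t = W (Measure.dirac (bump M n)) Q}.Finite := by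
          have : {t : ℝ | ∃ Q ∈ Φ, t = W (Measure.dirac (bump M n)) Q}
              = (fun Q => W (Measure.dirac (bump M n)) Q) '' ↑Φ := by
            ext t; simp [eq_comm]
          rw [this]; exact Φ.finite_toSet.image _
        have hne : {t : ℝ | ∃ Q ∈ Φ, t = W (Measure.dirac (bump M n)) Q}.Nonempty :=
          ⟨_, Q₀, hQ₀, rfl⟩
        exact hne.csInf_mem hfin
      choose Qf hQf hWf using hmin
      obtain ⟨n, m, hnm, hQeq⟩ :=
        Finite.exists_ne_map_eq_of_infinite (fun n => (⟨Qf n, hQf n⟩ : {Q // Q ∈ Φ}))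
      have hQeq' : Qf n = Qf m := congrArg Subtype.val hQeq
      have hQ1 : Qf n ∈ P1 𝒞 := hΦ1 (hQf n)
      have hsum : 2*M ≤ W (Measure.dirac (bump M n)) (Qf n)
          + W (Measure.dirac (bump M m)) (Qf n) :=
        le_trans (dist_bump_ge M hM.le hnm) (W_dirac_pair_ge hQ1 _ _)
      have hnS : sInf {t : ℝ | ∃ Q ∈ Φ, t = W (Measure.dirac (bump M n)) Q} ∈ S :=
        ⟨_, ⟨n, rfl⟩, rfl⟩
      have hmS : sInf {t : ℝ | ∃ Q ∈ Φ, t = W (Measure.dirac (bump M m)) Q} ∈ S :=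
        ⟨_, ⟨m, rfl⟩, rfl⟩
      have hor : M ≤ sInf {t : ℝ | ∃ Q ∈ Φ, t = W (Measure.dirac (bump M n)) Q}
          ∨ M ≤ sInf {t : ℝ | ∃ Q ∈ Φ, t = W (Measure.dirac (bump M m)) Q} := by
        by_contra h
        push_neg at h
        obtain ⟨h1, h2⟩ := h
        rw [hWf n] at h1
        rw [hWf m, ← hQeq'] at h2
        linarith
      rcases hor with h | h
      · exact le_trans h (le_csSup hSbdd hnS)
      · exact le_trans h (le_csSup hSbdd hmS)
    have hup : ∃ r ∈ T, r ≤ M := by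
      refine ⟨_, ⟨{Measure.dirac (ContinuousMap.const _ M)}, Finset.singleton_nonempty _,
        ?_, rfl⟩, ?_⟩
      · intro Q hQ
        simp only [Finset.coe_singleton, Set.mem_singleton_iff] at hQ
        subst hQ
        exact dirac_mem_P1 _
      · refine Real.sSup_le ?_ hM.le
        rintro s ⟨P, ⟨k, rfl⟩, rfl⟩
        have hst : {t : ℝ | ∃ Q ∈ ({Measure.dirac (ContinuousMap.const _ M)} :
            Finset (Measure 𝒞)), t = W (Measure.dirac (bump M k)) Q}
            = {W (Measure.dirac (bump M k)) (Measure.dirac (ContinuousMap.const _ M))} := by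
          ext t; simp
        rw [hst, csInf_singleton]
        refine le_trans (W_dirac_le (dirac_mem_P1 _) _) ?_
        rw [integral_dirac]
        exact dist_bump_const M hM.le k
    obtain ⟨r, hrT, hrle⟩ := hup
    have hrM : r = M := le_antisymm hrle (hlow r hrT)
    have hMT : M ∈ T := hrM ▸ hrT
    exact le_antisymm (csInf_le ⟨M, fun r hr => hlow r hr⟩ hMT) (le_csInf ⟨M, hMT⟩ hlow)
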